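/- Let S be a finite set of tuples, each contributing a term ∏_{j=1}^q \bar{c}_{m_j} c_{n_j} A_{m_j n_j} with |A_{m_j n_j}| ≤ ‖A‖, where ∑_m |c_m|² = 1. Suppose each index m appears at most 𝒩 times among the coordinates of all tuples in S. Then |∑_{Λ ∈ S} ∏_{j=1}^q \bar{c}_{m_j} c_{n_j} A_{m_j n_j}| ≤ (‖A‖^q 𝒩 / (2q)) · ∑_m |c_m|^{2q}. -/

import Mathlib

open Finset

/-- AM-GM: for a nonneg function on a nonempty fintype of cardinality `k`,
`∏ x i ≤ (∑ x i ^ k) / k`. -/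
lemma prod_le_sum_pow_card {κ : Type*} [Fintype κ] (x : κ → ℝ) (hx : ∀ i, 0 ≤ x i)
    (hk : 0 < Fintype.card κ) :
    ∏ i, x i ≤ (∑ i, x i ^ Fintype.card κ) / Fintype.card κ := by
  set k := Fintype.card κ with hkdef
  have hk0 : (0 : ℝ) < k := by exact_mod_cast hk
  have h := Real.geom_mean_le_arith_mean_weighted (univ : Finset κ)
    (fun _ => (k : ℝ)⁻¹) (fun i => x i ^ k)
    (fun i _ => by positivity)
    (by simp [Finset.card_univ, ← hkdef, mul_inv_cancel₀ hk0.ne'])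
    (fun i _ => pow_nonneg (hx i) k)
  have hL : ∀ i : κ, (x i ^ k) ^ ((k : ℝ)⁻¹) = x i := by
    intro i
    rw [← Real.rpow_natCast (x i) k, ← Real.rpow_mul (hx i),
      mul_inv_cancel₀ hk0.ne', Real.rpow_one]
  calc ∏ i, x i = ∏ i, (x i ^ k) ^ ((k : ℝ)⁻¹) := by
        exact (Finset.prod_congr rfl fun i _ => hL i).symm
    _ ≤ ∑ i, (k : ℝ)⁻¹ * x i ^ k := h
    _ = (∑ i, x i ^ k) / k := by
        rw [← Finset.mul_sum]; ring

/-- Fiberwise counting of a sum over `Fin q`. -/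
lemma sum_comp_eq_sum_card_mul {ι : Type*} [Fintype ι] [DecidableEq ι] {q : ℕ}
    (v : Fin q → ι) (g : ι → ℝ) :
    ∑ j, g (v j) = ∑ m, (((univ : Finset (Fin q)).filter fun j => v j = m).card : ℝ) * g m := by
  rw [← Finset.sum_fiberwise' (univ : Finset (Fin q)) v g]
  refine Finset.sum_congr rfl fun m _ => ?_
  rw [Finset.sum_const, nsmul_eq_mul]

/-- Bound on the contribution of resonance violations: if `S` is a finite set of tuples
`Λ = (m_1, n_1, …, m_q, n_q)` (encoded as maps `Fin q → ι × ι`), the matrix elements satisfy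
`‖A m n‖ ≤ a`, the state is normalized, and every index `m` appears at most `𝒩` times among
the coordinates of tuples of `S`, then
`‖∑_{Λ ∈ S} ∏_j conj (c (m_j)) * c (n_j) * A (m_j) (n_j)‖ ≤ (a^q 𝒩 / (2q)) ∑_m ‖c m‖^(2q)`. -/
theorem violation_sum_bound {ι : Type*} [Fintype ι] [DecidableEq ι] (q : ℕ) (hq : 1 ≤ q)
    (S : Finset (Fin q → ι × ι)) (c : ι → ℂ) (A : ι → ι → ℂ) (a : ℝ) (𝒩 : ℕ)
    (hA : ∀ m n, ‖A m n‖ ≤ a)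
    (hnorm : ∑ m, ‖c m‖ ^ 2 = 1)
    (hcount : ∀ m : ι,
      (∑ Λ ∈ S, (((univ : Finset (Fin q)).filter fun j => (Λ j).1 = m).card
        + ((univ : Finset (Fin q)).filter fun j => (Λ j).2 = m).card)) ≤ 𝒩) :
    ‖∑ Λ ∈ S, ∏ j, (starRingEnd ℂ) (c (Λ j).1) * c (Λ j).2 * A (Λ j).1 (Λ j).2‖
      ≤ a ^ q * 𝒩 / (2 * q) * ∑ m, ‖c m‖ ^ (2 * q) := by
  rcases isEmpty_or_nonempty ι with hE | hNE
  · have hqpos : 0 < q := hq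
    have : IsEmpty (Fin q → ι × ι) := by
      have : Nonempty (Fin q) := ⟨⟨0, hqpos⟩⟩
      infer_instance
    have hS : S = ∅ := Finset.eq_empty_of_isEmpty S
    simp [hS]
  · have ha : 0 ≤ a := le_trans (norm_nonneg _)
      (hA (Classical.arbitrary ι) (Classical.arbitrary ι))
    have hqR : (0 : ℝ) < 2 * q := by positivity
    -- per-tuple bound
    have key : ∀ Λ ∈ S,
        ‖∏ j, (starRingEnd ℂ) (c (Λ j).1) * c (Λ j).2 * A (Λ j).1 (Λ j).2‖
          ≤ a ^ q * ((∑ j, (‖c (Λ j).1‖ ^ (2 * q) + ‖c (Λ j).2‖ ^ (2 * q))) / (2 * q)) := by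
      intro Λ _
      have h1 : ‖∏ j, (starRingEnd ℂ) (c (Λ j).1) * c (Λ j).2 * A (Λ j).1 (Λ j).2‖
          ≤ a ^ q * ∏ j, ‖c (Λ j).1‖ * ‖c (Λ j).2‖ := by
        rw [norm_prod]
        calc ∏ j, ‖(starRingEnd ℂ) (c (Λ j).1) * c (Λ j).2 * A (Λ j).1 (Λ j).2‖
            ≤ ∏ j : Fin q, (‖c (Λ j).1‖ * ‖c (Λ j).2‖) * a := by
              refine Finset.prod_le_prod (fun j _ => norm_nonneg _) fun j _ => ?_
              rw [norm_mul, norm_mul, RingHomIsometric.norm_map]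
              exact mul_le_mul_of_nonneg_left (hA _ _)
                (mul_nonneg (norm_nonneg _) (norm_nonneg _))
          _ = a ^ q * ∏ j, ‖c (Λ j).1‖ * ‖c (Λ j).2‖ := by
              rw [Finset.prod_mul_distrib, Finset.prod_const, Finset.card_univ,
                Fintype.card_fin, mul_comm]
      have h2 : ∏ j, ‖c (Λ j).1‖ * ‖c (Λ j).2‖
          ≤ (∑ j, (‖c (Λ j).1‖ ^ (2 * q) + ‖c (Λ j).2‖ ^ (2 * q))) / (2 * q) := by
        have hcard : Fintype.card (Fin q × Bool) = 2 * q := by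
          simp [Fintype.card_prod, mul_comm]
        have := prod_le_sum_pow_card
          (fun p : Fin q × Bool => if p.2 then ‖c (Λ p.1).1‖ else ‖c (Λ p.1).2‖)
          (fun p => by split <;> exact norm_nonneg _)
          (by rw [hcard]; positivity)
        rw [hcard] at this
        calc ∏ j, ‖c (Λ j).1‖ * ‖c (Λ j).2‖
            = ∏ p : Fin q × Bool, (if p.2 then ‖c (Λ p.1).1‖ else ‖c (Λ p.1).2‖) := by
              rw [Fintype.prod_prod_type]
              exact Finset.prod_congr rfl fun j _ => by simp [mul_comm]
          _ ≤ (∑ p : Fin q × Bool,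
                (if p.2 then ‖c (Λ p.1).1‖ else ‖c (Λ p.1).2‖) ^ (2 * q)) / ((2 * q : ℕ) : ℝ) :=
              this
          _ = (∑ j, (‖c (Λ j).1‖ ^ (2 * q) + ‖c (Λ j).2‖ ^ (2 * q))) / (2 * q) := by
              rw [Fintype.sum_prod_type]
              push_cast
              congr 1
              exact Finset.sum_congr rfl fun j _ => by simp [add_comm]
      calc ‖∏ j, (starRingEnd ℂ) (c (Λ j).1) * c (Λ j).2 * A (Λ j).1 (Λ j).2‖
          ≤ a ^ q * ∏ j, ‖c (Λ j).1‖ * ‖c (Λ j).2‖ := h1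
        _ ≤ a ^ q * ((∑ j, (‖c (Λ j).1‖ ^ (2 * q) + ‖c (Λ j).2‖ ^ (2 * q))) / (2 * q)) :=
            mul_le_mul_of_nonneg_left h2 (by positivity)
    -- counting bound
    have count : ∑ Λ ∈ S, ∑ j, (‖c (Λ j).1‖ ^ (2 * q) + ‖c (Λ j).2‖ ^ (2 * q))
        ≤ (𝒩 : ℝ) * ∑ m, ‖c m‖ ^ (2 * q) := by
      have step : ∀ Λ : Fin q → ι × ι,
          ∑ j, (‖c (Λ j).1‖ ^ (2 * q) + ‖c (Λ j).2‖ ^ (2 * q))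
            = ∑ m, ((((univ : Finset (Fin q)).filter fun j => (Λ j).1 = m).card : ℝ)
                + (((univ : Finset (Fin q)).filter fun j => (Λ j).2 = m).card : ℝ))
                * ‖c m‖ ^ (2 * q) := by
        intro Λ
        rw [Finset.sum_add_distrib,
          sum_comp_eq_sum_card_mul (fun j => (Λ j).1) (fun m => ‖c m‖ ^ (2 * q)),
          sum_comp_eq_sum_card_mul (fun j => (Λ j).2) (fun m => ‖c m‖ ^ (2 * q)),
          ← Finset.sum_add_distrib]
        exact Finset.sum_congr rfl fun m _ => by ring
      calc ∑ Λ ∈ S, ∑ j, (‖c (Λ j).1‖ ^ (2 * q) + ‖c (Λ j).2‖ ^ (2 * q))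
          = ∑ m, (∑ Λ ∈ S,
              ((((univ : Finset (Fin q)).filter fun j => (Λ j).1 = m).card : ℝ)
                + (((univ : Finset (Fin q)).filter fun j => (Λ j).2 = m).card : ℝ)))
              * ‖c m‖ ^ (2 * q) := by
            rw [Finset.sum_congr rfl fun Λ _ => step Λ, Finset.sum_comm]
            exact Finset.sum_congr rfl fun m _ => by rw [Finset.sum_mul]
        _ ≤ ∑ m, (𝒩 : ℝ) * ‖c m‖ ^ (2 * q) := by
            refine Finset.sum_le_sum fun m _ => ?_
            refine mul_le_mul_of_nonneg_right ?_ (by positivity)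
            exact_mod_cast hcount m
        _ = (𝒩 : ℝ) * ∑ m, ‖c m‖ ^ (2 * q) := by rw [Finset.mul_sum]
    calc ‖∑ Λ ∈ S, ∏ j, (starRingEnd ℂ) (c (Λ j).1) * c (Λ j).2 * A (Λ j).1 (Λ j).2‖
        ≤ ∑ Λ ∈ S, ‖∏ j, (starRingEnd ℂ) (c (Λ j).1) * c (Λ j).2 * A (Λ j).1 (Λ j).2‖ :=
          norm_sum_le _ _
      _ ≤ ∑ Λ ∈ S, a ^ q * ((∑ j, (‖c (Λ j).1‖ ^ (2 * q) + ‖c (Λ j).2‖ ^ (2 * q))) / (2 * q)) :=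
          Finset.sum_le_sum key
      _ = a ^ q / (2 * q) * ∑ Λ ∈ S, ∑ j, (‖c (Λ j).1‖ ^ (2 * q) + ‖c (Λ j).2‖ ^ (2 * q)) := by
          rw [Finset.mul_sum]
          exact Finset.sum_congr rfl fun Λ _ => by ring
      _ ≤ a ^ q / (2 * q) * ((𝒩 : ℝ) * ∑ m, ‖c m‖ ^ (2 * q)) :=
          mul_le_mul_of_nonneg_left count (by positivity)
      _ = a ^ q * 𝒩 / (2 * q) * ∑ m, ‖c m‖ ^ (2 * q) := by ring
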